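/- Let I, J ∈ [n]^{2k-1} be two strictly increasing vectors agreeing on at most k-1 coordinates. Then in the Leibniz expansion of det(V_{I,J}(X)) as a signed sum of (2k-1)! monomials (one per permutation), there exists a monomial obtained from exactly one permutation; in particular this monomial appears in det(V_{I,J}(X)) with coefficient ±1. -/
import Mathlib


/-- The `(2k-1) × (2k-1)` matrix whose `ℓ`-th row is
`(1, x_ℓ, …, x_ℓ^{k-1}, y_ℓ, …, y_ℓ^{k-1})`. -/
def vandIJ {R : Type*} [CommRing R] (k : ℕ) (x y : Fin (2 * k - 1) → R) :
    Matrix (Fin (2 * k - 1)) (Fin (2 * k - 1)) R :=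
  fun ℓ c =>
    if (c : ℕ) = 0 then 1
    else if (c : ℕ) ≤ k - 1 then x ℓ ^ (c : ℕ)
    else y ℓ ^ ((c : ℕ) - (k - 1))

/-- The matrix `V_{I,J}(X)` over `ℤ[X_1,…,X_n]`. -/
noncomputable def VIJ (n k : ℕ) (I J : Fin (2 * k - 1) → Fin n) :
    Matrix (Fin (2 * k - 1)) (Fin (2 * k - 1)) (MvPolynomial (Fin n) ℤ) :=
  vandIJ k (fun ℓ => MvPolynomial.X (I ℓ)) (fun ℓ => MvPolynomial.X (J ℓ))

open Finset MvPolynomial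

namespace VIJaux

variable {n k : ℕ} (I J : Fin (2*k-1) → Fin n)

/-- Disagreeing rows. -/
def Dset : Finset (Fin (2*k-1)) := univ.filter (fun ℓ => I ℓ ≠ J ℓ)

/-- Two strictly monotone maps with the same image on a finset agree on it. -/
lemma eqOn_of_image_eq (hI : StrictMono I) (hJ : StrictMono J) :
    ∀ (s : Finset (Fin (2*k-1))), s.image I = s.image J → ∀ x ∈ s, I x = J x := by
  intro s
  induction s using Finset.strongInduction with
  | _ s ih =>
    intro h x hx
    have hs : s.Nonempty := ⟨x, hx⟩
    set M := s.max' hs with hM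
    have hMmem : M ∈ s := s.max'_mem hs
    have hIM : (s.image I).max' (hs.image I) = I M := by
      apply le_antisymm
      · apply Finset.max'_le
        intro y hy
        obtain ⟨z, hz, rfl⟩ := Finset.mem_image.mp hy
        exact hI.monotone (s.le_max' z hz)
      · exact Finset.le_max' _ _ (Finset.mem_image_of_mem I hMmem)
    have hJM : (s.image J).max' (hs.image J) = J M := by
      apply le_antisymm
      · apply Finset.max'_le
        intro y hy
        obtain ⟨z, hz, rfl⟩ := Finset.mem_image.mp hy
        exact hJ.monotone (s.le_max' z hz)
      · exact Finset.le_max' _ _ (Finset.mem_image_of_mem J hMmem)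
    have hMeq : I M = J M := by
      rw [← hIM]
      conv_rhs => rw [← hJM]
      congr 1
    by_cases hxM : x = M
    · rw [hxM]; exact hMeq
    · have herase : (s.erase M).image I = (s.erase M).image J := by
        rw [Finset.image_erase hI.injective, Finset.image_erase hJ.injective, h, hMeq]
      exact ih (s.erase M) (Finset.erase_ssubset hMmem) herase x
        (Finset.mem_erase.mpr ⟨hxM, hx⟩)

/-- In any nonempty set of disagreeing rows there is an "anchor" `a` such that no
row of the set carries the `J`-value `I a`. -/
lemma exists_anchor (hI : StrictMono I) (hJ : StrictMono J)
    {S : Finset (Fin (2*k-1))} (hne : S.Nonempty) (hSD : S ⊆ Dset I J) :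
    ∃ a, a ∈ S ∧ ∀ b, J b = I a → b ∉ S := by
  by_contra hcon
  push_neg at hcon
  have hsub : S.image I ⊆ S.image J := by
    intro v hv
    obtain ⟨a, ha, rfl⟩ := Finset.mem_image.mp hv
    obtain ⟨b, hb1, hb2⟩ := hcon a ha
    exact Finset.mem_image.mpr ⟨b, hb2, hb1⟩
  have heq : S.image I = S.image J := by
    apply Finset.eq_of_subset_of_card_le hsub
    rw [Finset.card_image_of_injective _ hJ.injective,
      Finset.card_image_of_injective _ hI.injective]
  obtain ⟨x, hx⟩ := hne
  have := eqOn_of_image_eq I J hI hJ S heq x hx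
  have hxD := hSD hx
  simp [Dset] at hxD
  exact hxD this


variable (hk : 1 ≤ k)

/-- Pick an anchor from `S`, if one exists. -/
noncomputable def pick (S : Finset (Fin (2*k-1))) : Fin (2*k-1) :=
  if h : ∃ a, a ∈ S ∧ ∀ b, J b = I a → b ∉ S then h.choose else ⟨0, by omega⟩

lemma pick_spec {S : Finset (Fin (2*k-1))}
    (h : ∃ a, a ∈ S ∧ ∀ b, J b = I a → b ∉ S) :
    pick I J hk S ∈ S ∧ ∀ b, J b = I (pick I J hk S) → b ∉ S := by
  rw [pick, dif_pos h]
  exact h.choose_spec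

/-- Set of the first `j` greedily chosen anchor rows. -/
noncomputable def gset : ℕ → Finset (Fin (2*k-1))
  | 0 => ∅
  | (j+1) => insert (pick I J hk (Dset I J \ gset j)) (gset j)

/-- The `j`-th greedily chosen anchor row. -/
noncomputable def arowN (j : ℕ) : Fin (2*k-1) := pick I J hk (Dset I J \ gset I J hk j)

lemma gset_succ (j : ℕ) :
    gset I J hk (j+1) = insert (arowN I J hk j) (gset I J hk j) := rfl

lemma gset_card_le (j : ℕ) : (gset I J hk j).card ≤ j := by
  induction j with
  | zero => simp [gset]
  | succ j ih =>
      rw [gset_succ]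
      calc _ ≤ (gset I J hk j).card + 1 := Finset.card_insert_le _ _
      _ ≤ j + 1 := by omega

lemma cond_holds (hI : StrictMono I) (hJ : StrictMono J) (hD : k ≤ (Dset I J).card) {j : ℕ} (hj : j < k) :
    ∃ a, a ∈ Dset I J \ gset I J hk j ∧ ∀ b, J b = I a → b ∉ Dset I J \ gset I J hk j := by
  apply exists_anchor I J hI hJ _ Finset.sdiff_subset
  have h1 := gset_card_le I J hk j
  have h2 : (Dset I J \ gset I J hk j).card ≥ (Dset I J).card - (gset I J hk j).card :=
    Finset.le_card_sdiff _ _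
  rw [← Finset.card_pos]
  omega

lemma arow_mem (hI : StrictMono I) (hJ : StrictMono J) (hD : k ≤ (Dset I J).card) {j : ℕ} (hj : j < k) :
    arowN I J hk j ∈ Dset I J \ gset I J hk j :=
  (pick_spec I J hk (cond_holds I J hk hI hJ hD hj)).1

lemma arow_anchor (hI : StrictMono I) (hJ : StrictMono J) (hD : k ≤ (Dset I J).card) {j : ℕ} (hj : j < k) :
    ∀ b, J b = I (arowN I J hk j) → b ∈ gset I J hk j := by
  intro b hb
  have hspec := (pick_spec I J hk (cond_holds I J hk hI hJ hD hj)).2 b hb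
  rw [Finset.mem_sdiff] at hspec
  push_neg at hspec
  by_cases hbD : b ∈ Dset I J
  · exact hspec hbD
  · exfalso
    simp only [Dset, Finset.mem_filter, Finset.mem_univ, true_and, not_not] at hbD
    rw [← hbD] at hb
    have : b = arowN I J hk j := hI.injective hb
    subst this
    have := arow_mem I J hk hI hJ hD hj
    rw [Finset.mem_sdiff] at this
    simp [Dset, hbD] at this

lemma mem_gset {j : ℕ} {b : Fin (2*k-1)} :
    b ∈ gset I J hk j ↔ ∃ i, i < j ∧ b = arowN I J hk i := by
  induction j with
  | zero => simp [gset]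
  | succ j ih =>
      rw [gset_succ, Finset.mem_insert, ih]
      constructor
      · rintro (rfl | ⟨i, hi, rfl⟩)
        · exact ⟨j, by omega, rfl⟩
        · exact ⟨i, by omega, rfl⟩
      · rintro ⟨i, hi, rfl⟩
        rcases Nat.lt_succ_iff_lt_or_eq.mp hi with h | rfl
        · exact Or.inr ⟨i, h, rfl⟩
        · exact Or.inl rfl

lemma gset_card (hI : StrictMono I) (hJ : StrictMono J) (hD : k ≤ (Dset I J).card) {j : ℕ} (hj : j ≤ k) : (gset I J hk j).card = j := by
  induction j with
  | zero => simp [gset]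
  | succ j ih =>
      rw [gset_succ, Finset.card_insert_of_notMem, ih (by omega)]
      have := arow_mem I J hk hI hJ hD (show j < k by omega)
      rw [Finset.mem_sdiff] at this
      exact this.2

lemma arow_ne (hI : StrictMono I) (hJ : StrictMono J) (hD : k ≤ (Dset I J).card) {i j : ℕ} (hij : i < j) (hj : j < k) :
    arowN I J hk i ≠ arowN I J hk j := by
  intro h
  have hmem := arow_mem I J hk hI hJ hD hj
  rw [Finset.mem_sdiff] at hmem
  exact hmem.2 ((mem_gset I J hk).mpr ⟨i, hij, h.symm⟩)

/-- The complement of the chosen anchor rows. -/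
noncomputable def Bcompl : Finset (Fin (2*k-1)) := univ \ gset I J hk (k-1)

lemma Bcompl_card (hI : StrictMono I) (hJ : StrictMono J) (hD : k ≤ (Dset I J).card) : (Bcompl I J hk).card = k := by
  rw [Bcompl, Finset.card_sdiff_of_subset (Finset.subset_univ _),
    gset_card I J hk hI hJ hD (by omega), Finset.card_univ, Fintype.card_fin]
  omega

/-- The `c`-th row of the complement (used for the `J`-side and the leftover row). -/
noncomputable def browN (c : ℕ) : Fin (2*k-1) :=
  if h : c < (Bcompl I J hk).card then
    (((Bcompl I J hk).orderIsoOfFin rfl) ⟨c, h⟩ : Fin (2*k-1)) else ⟨0, by omega⟩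

lemma brow_mem {c : ℕ} (hc : c < (Bcompl I J hk).card) :
    browN I J hk c ∈ Bcompl I J hk := by
  rw [browN, dif_pos hc]
  exact Finset.coe_mem _

lemma brow_inj {c c' : ℕ} (hc : c < (Bcompl I J hk).card)
    (hc' : c' < (Bcompl I J hk).card) (h : browN I J hk c = browN I J hk c') : c = c' := by
  simp only [browN] at h
  rw [dif_pos hc, dif_pos hc'] at h
  have := ((Bcompl I J hk).orderIsoOfFin rfl).injective (Subtype.coe_injective h)
  exact congrArg Fin.val this


/-- The underlying function of the distinguished permutation `σ₀` (columns → rows). -/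
noncomputable def sigmaFun : Fin (2*k-1) → Fin (2*k-1) := fun col =>
  if (col : ℕ) = 0 then browN I J hk (k-1)
  else if (col : ℕ) ≤ k-1 then arowN I J hk (k-1-(col : ℕ))
  else browN I J hk ((col : ℕ)-k)

/-- The `I`-column for stage `c` (exponent `c+1`). -/
def colIN (c : ℕ) : Fin (2*k-1) := ⟨min (c+1) (2*k-2), by omega⟩

/-- The `J`-column for stage `c` (exponent `c+1`). -/
def colJN (c : ℕ) : Fin (2*k-1) := ⟨min (k+c) (2*k-2), by omega⟩

lemma colIN_val {c : ℕ} (hc : c < k-1) : ((colIN hk c : Fin (2*k-1)) : ℕ) = c+1 := by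
  simp only [colIN]; omega

lemma colJN_val {c : ℕ} (hc : c < k-1) : ((colJN hk c : Fin (2*k-1)) : ℕ) = k+c := by
  simp only [colJN]; omega

/-- The row used in the stage-`c` anchor column. -/
noncomputable def arowC (c : ℕ) : Fin (2*k-1) := arowN I J hk (k-2-c)

lemma sigmaFun_colI {c : ℕ} (hc : c < k-1) :
    sigmaFun I J hk (colIN hk c) = arowC I J hk c := by
  have h1 := colIN_val hk hc
  simp only [sigmaFun, h1, arowC]
  rw [if_neg (by omega), if_pos (by omega)]
  congr 1
  omega

lemma sigmaFun_colJ {c : ℕ} (hc : c < k-1) :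
    sigmaFun I J hk (colJN hk c) = browN I J hk c := by
  have h1 := colJN_val hk hc
  simp only [sigmaFun, h1]
  rw [if_neg (by omega), if_neg (by omega)]
  congr 1
  omega

lemma arowC_mem_gset (hI : StrictMono I) (hJ : StrictMono J) (hD : k ≤ (Dset I J).card)
    {c : ℕ} (hc : c < k-1) : arowC I J hk c ∈ gset I J hk (k-1) :=
  (mem_gset I J hk).mpr ⟨k-2-c, by omega, rfl⟩

lemma brow_notMem_gset (hI : StrictMono I) (hJ : StrictMono J) (hD : k ≤ (Dset I J).card)
    {c : ℕ} (hc : c ≤ k-1) : browN I J hk c ∉ gset I J hk (k-1) := by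
  have : browN I J hk c ∈ Bcompl I J hk := by
    apply brow_mem
    rw [Bcompl_card I J hk hI hJ hD]
    omega
  rw [Bcompl, Finset.mem_sdiff] at this
  exact this.2

lemma arowC_ne (hI : StrictMono I) (hJ : StrictMono J) (hD : k ≤ (Dset I J).card)
    {c c' : ℕ} (hc : c < k-1) (hc' : c' < k-1) (hne : c ≠ c') :
    arowC I J hk c ≠ arowC I J hk c' := by
  rw [arowC, arowC]
  rcases Nat.lt_or_ge (k-2-c') (k-2-c) with h | h
  · exact (arow_ne I J hk hI hJ hD h (by omega)).symm
  · have h2 : k-2-c < k-2-c' := by omega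
    exact arow_ne I J hk hI hJ hD h2 (by omega)

lemma browC_ne (hI : StrictMono I) (hJ : StrictMono J) (hD : k ≤ (Dset I J).card)
    {c c' : ℕ} (hc : c ≤ k-1) (hc' : c' ≤ k-1) (hne : c ≠ c') :
    browN I J hk c ≠ browN I J hk c' := by
  intro h
  have hcard := Bcompl_card I J hk hI hJ hD
  exact hne (brow_inj I J hk (by omega) (by omega) h)

lemma sigmaFun_inj (hI : StrictMono I) (hJ : StrictMono J) (hD : k ≤ (Dset I J).card) :
    Function.Injective (sigmaFun I J hk) := by
  have hcard := Bcompl_card I J hk hI hJ hD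
  intro col col' h
  have hAg : ∀ v : ℕ, 1 ≤ v → v ≤ k-1 → arowN I J hk (k-1-v) ∈ gset I J hk (k-1) :=
    fun v h1 h2 => (mem_gset I J hk).mpr ⟨k-1-v, by omega, rfl⟩
  have hBg : ∀ c : ℕ, c ≤ k-1 → browN I J hk c ∉ gset I J hk (k-1) :=
    fun c h2 => brow_notMem_gset I J hk hI hJ hD h2
  simp only [sigmaFun] at h
  apply Fin.ext
  have hcol := col.isLt
  have hcol' := col'.isLt
  by_cases h0 : (col : ℕ) = 0
  · rw [if_pos h0] at h
    by_cases h0' : (col' : ℕ) = 0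
    · omega
    · rw [if_neg h0'] at h
      by_cases h1' : (col' : ℕ) ≤ k-1
      · rw [if_pos h1'] at h
        exact absurd (h ▸ hBg (k-1) le_rfl) (by simp [hAg (col' : ℕ) (by omega) h1'])
      · rw [if_neg h1'] at h
        have := brow_inj I J hk (by omega) (by omega) h
        omega
  · rw [if_neg h0] at h
    by_cases h0' : (col' : ℕ) = 0
    · rw [if_pos h0'] at h
      by_cases h1 : (col : ℕ) ≤ k-1
      · rw [if_pos h1] at h
        exact absurd (h ▸ hAg (col : ℕ) (by omega) h1) (by simp [hBg (k-1) le_rfl])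
      · rw [if_neg h1] at h
        have := brow_inj I J hk (by omega) (by omega) h
        omega
    · rw [if_neg h0'] at h
      by_cases h1 : (col : ℕ) ≤ k-1 <;> by_cases h1' : (col' : ℕ) ≤ k-1
      · rw [if_pos h1, if_pos h1'] at h
        rcases Nat.lt_trichotomy (k-1-(col:ℕ)) (k-1-(col':ℕ)) with hlt | heq | hlt
        · exact absurd h (arow_ne I J hk hI hJ hD hlt (by omega))
        · omega
        · exact absurd h.symm (arow_ne I J hk hI hJ hD hlt (by omega))
      · rw [if_pos h1, if_neg h1'] at h
        exact absurd (h ▸ hAg (col:ℕ) (by omega) h1)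
          (by simp [hBg ((col':ℕ)-k) (by omega)])
      · rw [if_neg h1, if_pos h1'] at h
        exact absurd (h.symm ▸ hAg (col':ℕ) (by omega) h1')
          (by simp [hBg ((col:ℕ)-k) (by omega)])
      · rw [if_neg h1, if_neg h1'] at h
        have := brow_inj I J hk (by omega) (by omega) h
        omega

/-- The distinguished permutation `σ₀`. -/
noncomputable def sigmaPerm (hI : StrictMono I) (hJ : StrictMono J)
    (hD : k ≤ (Dset I J).card) : Equiv.Perm (Fin (2*k-1)) :=
  Equiv.ofBijective (sigmaFun I J hk)
    (Finite.injective_iff_bijective.mp (sigmaFun_inj I J hk hI hJ hD))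

lemma sigmaPerm_apply (hI : StrictMono I) (hJ : StrictMono J) (hD : k ≤ (Dset I J).card)
    (col : Fin (2*k-1)) : sigmaPerm I J hk hI hJ hD col = sigmaFun I J hk col := rfl


/-- The exponent vector of the Leibniz monomial of `σ`. -/
noncomputable def dd (σ : Equiv.Perm (Fin (2*k-1))) : Fin n →₀ ℕ :=
  ∑ c ∈ Finset.range (k-1),
    (Finsupp.single (I (σ (colIN hk c))) (c+1) + Finsupp.single (J (σ (colJN hk c))) (c+1))

lemma monomial_prod {α : Type*} (s : Finset α) (f : α → (Fin n →₀ ℕ)) :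
    (monomial (∑ c ∈ s, f c) (1:ℤ)) = ∏ c ∈ s, monomial (f c) (1:ℤ) := by
  induction s using Finset.cons_induction with
  | empty => simp [MvPolynomial.monomial_zero']
  | cons a s ha ih =>
      rw [Finset.sum_cons, Finset.prod_cons, ← ih, MvPolynomial.monomial_mul, one_mul]

lemma prod_eq_monomial (σ : Equiv.Perm (Fin (2*k-1))) :
    (∏ ℓ, VIJ n k I J (σ ℓ) ℓ) = monomial (dd I J hk σ) (1:ℤ) := by
  classical
  set f : ℕ → MvPolynomial (Fin n) ℤ :=
    fun j => if h : j < 2*k-1 then VIJ n k I J (σ ⟨j,h⟩) ⟨j,h⟩ else 1 with hf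
  have h1 : (∏ ℓ, VIJ n k I J (σ ℓ) ℓ) = ∏ j ∈ Finset.range (2*k-1), f j := by
    rw [← Fin.prod_univ_eq_prod_range f (2*k-1)]
    refine Finset.prod_congr rfl fun ℓ _ => ?_
    simp only [hf]
    rw [dif_pos ℓ.isLt]
  have h2 : (∏ j ∈ Finset.range (2*k-1), f j) =
      (∏ j ∈ Finset.range k, f j) * ∏ j ∈ Finset.Ico k (2*k-1), f j :=
    (Finset.prod_range_mul_prod_Ico f (by omega)).symm
  have h3 : (∏ j ∈ Finset.range k, f j) = f 0 * ∏ j ∈ Finset.Ico 1 k, f j := by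
    rw [Finset.range_eq_Ico, Finset.prod_eq_prod_Ico_succ_bot (by omega)]
  have hf0 : f 0 = 1 := by
    simp only [hf]
    rw [dif_pos (by omega : 0 < 2*k-1)]
    simp [VIJ, vandIJ]
  have h4 : (∏ j ∈ Finset.Ico 1 k, f j) =
      ∏ c ∈ Finset.range (k-1), X (I (σ (colIN hk c))) ^ (c+1) := by
    rw [Finset.prod_Ico_eq_prod_range]
    refine Finset.prod_congr (by congr 1) fun c hc => ?_
    rw [Finset.mem_range] at hc
    simp only [hf]
    rw [dif_pos (by omega : 1+c < 2*k-1)]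
    have hcol : (⟨1+c, by omega⟩ : Fin (2*k-1)) = colIN hk c := by
      apply Fin.ext
      rw [colIN_val hk hc]
      show 1+c = c+1
      omega
    rw [hcol]
    have hv := colIN_val hk hc
    simp only [VIJ, vandIJ, hv]
    rw [if_neg (by omega), if_pos (by omega)]
  have h5 : (∏ j ∈ Finset.Ico k (2*k-1), f j) =
      ∏ c ∈ Finset.range (k-1), X (J (σ (colJN hk c))) ^ (c+1) := by
    rw [Finset.prod_Ico_eq_prod_range]
    refine Finset.prod_congr (by congr 1; omega) fun c hc => ?_
    rw [Finset.mem_range] at hc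
    simp only [hf]
    rw [dif_pos (by omega : k+c < 2*k-1)]
    have hcol : (⟨k+c, by omega⟩ : Fin (2*k-1)) = colJN hk c := by
      apply Fin.ext
      rw [colJN_val hk hc]
    rw [hcol]
    have hv := colJN_val hk hc
    simp only [VIJ, vandIJ, hv]
    rw [if_neg (by omega), if_neg (by omega)]
    have h6 : (k+c) - (k-1) = c+1 := by omega
    rw [h6]
  have hR : (monomial (dd I J hk σ) (1:ℤ)) =
      (∏ c ∈ Finset.range (k-1), X (I (σ (colIN hk c))) ^ (c+1)) *
      ∏ c ∈ Finset.range (k-1), X (J (σ (colJN hk c))) ^ (c+1) := by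
    rw [dd, monomial_prod, ← Finset.prod_mul_distrib]
    refine Finset.prod_congr rfl fun c hc => ?_
    rw [MvPolynomial.X_pow_eq_monomial, MvPolynomial.X_pow_eq_monomial,
      MvPolynomial.monomial_mul, one_mul]
  rw [h1, h2, h3, hf0, one_mul, h4, h5, hR]


section Budget

variable (hI : StrictMono I) (hJ : StrictMono J) (hD : k ≤ (Dset I J).card)

lemma cross_ne (hI : StrictMono I) (hJ : StrictMono J) (hD : k ≤ (Dset I J).card)
    {c c' : ℕ} (hc : c < k-1) (hc' : c' ≤ k-1) :
    J (browN I J hk c') ≠ I (arowC I J hk c) := by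
  intro h
  have hmem := arow_anchor I J hk hI hJ hD (show k-2-c < k by omega) _ h
  have : browN I J hk c' ∈ gset I J hk (k-1) := by
    obtain ⟨i, hi, hbe⟩ := (mem_gset I J hk).mp hmem
    exact (mem_gset I J hk).mpr ⟨i, by omega, hbe⟩
  exact brow_notMem_gset I J hk hI hJ hD hc' this

lemma dd_apply (σ : Equiv.Perm (Fin (2*k-1))) (v : Fin n) :
    dd I J hk σ v = ∑ c ∈ Finset.range (k-1),
      ((if I (σ (colIN hk c)) = v then c+1 else 0) +
        (if J (σ (colJN hk c)) = v then c+1 else 0)) := by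
  rw [dd, Finsupp.finset_sum_apply]
  refine Finset.sum_congr rfl fun c _ => ?_
  rw [Finsupp.add_apply, Finsupp.single_apply, Finsupp.single_apply]

lemma dd_sigma_apply (v : Fin n) :
    dd I J hk (sigmaPerm I J hk hI hJ hD) v = ∑ c ∈ Finset.range (k-1),
      ((if I (arowC I J hk c) = v then c+1 else 0) +
        (if J (browN I J hk c) = v then c+1 else 0)) := by
  rw [dd_apply]
  refine Finset.sum_congr rfl fun c hc => ?_
  rw [Finset.mem_range] at hc
  rw [sigmaPerm_apply, sigmaPerm_apply, sigmaFun_colI I J hk hc, sigmaFun_colJ I J hk hc]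

lemma E_eq_I {c : ℕ} (hc : c < k-1) :
    dd I J hk (sigmaPerm I J hk hI hJ hD) (I (arowC I J hk c)) = c+1 := by
  rw [dd_sigma_apply I J hk hI hJ hD]
  rw [Finset.sum_eq_single_of_mem c (Finset.mem_range.mpr hc) (fun c' hc' hne => by
    rw [Finset.mem_range] at hc'
    rw [if_neg (fun h => arowC_ne I J hk hI hJ hD hc' hc hne (hI.injective h)),
      if_neg (cross_ne I J hk hI hJ hD hc (by omega))]
    omega)]
  rw [if_pos rfl, if_neg (cross_ne I J hk hI hJ hD hc (by omega))]

lemma E_eq_J {c : ℕ} (hc : c < k-1) :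
    dd I J hk (sigmaPerm I J hk hI hJ hD) (J (browN I J hk c)) = c+1 := by
  rw [dd_sigma_apply I J hk hI hJ hD]
  rw [Finset.sum_eq_single_of_mem c (Finset.mem_range.mpr hc) (fun c' hc' hne => by
    rw [Finset.mem_range] at hc'
    rw [if_neg (fun h => (cross_ne I J hk hI hJ hD hc' (by omega)) h.symm),
      if_neg (fun h => browC_ne I J hk hI hJ hD (by omega) (by omega) hne (hJ.injective h))]
    omega)]
  rw [if_neg (fun h => (cross_ne I J hk hI hJ hD hc (by omega)) h.symm), if_pos rfl]
  omega

lemma E_classify {v : Fin n}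
    (h : dd I J hk (sigmaPerm I J hk hI hJ hD) v ≠ 0) :
    ∃ c, c < k-1 ∧ (v = I (arowC I J hk c) ∨ v = J (browN I J hk c)) := by
  by_contra hcon
  push_neg at hcon
  apply h
  rw [dd_sigma_apply I J hk hI hJ hD]
  apply Finset.sum_eq_zero
  intro c hc
  rw [Finset.mem_range] at hc
  obtain ⟨h1, h2⟩ := hcon c hc
  rw [if_neg (fun hh => h1 hh.symm), if_neg (fun hh => h2 hh.symm)]
  omega


theorem tau_eq_sigma (τ : Equiv.Perm (Fin (2*k-1)))
    (hττ : dd I J hk τ = dd I J hk (sigmaPerm I J hk hI hJ hD)) :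
    τ = sigmaPerm I J hk hI hJ hD := by
  set σ₀ := sigmaPerm I J hk hI hJ hD with hσ₀
  -- single-term lower bound
  have hterm : ∀ (v : Fin n) (c0 : ℕ), c0 < k-1 →
      ((if I (τ (colIN hk c0)) = v then c0+1 else 0) +
        (if J (τ (colJN hk c0)) = v then c0+1 else 0)) ≤ dd I J hk τ v := by
    intro v c0 hc0
    rw [dd_apply]
    exact Finset.single_le_sum
      (f := fun c => ((if I (τ (colIN hk c)) = v then c+1 else 0) +
        (if J (τ (colJN hk c)) = v then c+1 else 0)))
      (fun i _ => Nat.zero_le _) (Finset.mem_range.mpr hc0)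
  -- two-term lower bound
  have hpair : ∀ (v : Fin n) (c0 c1 : ℕ), c0 < k-1 → c1 < k-1 → c0 ≠ c1 →
      ((if I (τ (colIN hk c0)) = v then c0+1 else 0) +
        (if J (τ (colJN hk c0)) = v then c0+1 else 0)) +
      ((if I (τ (colIN hk c1)) = v then c1+1 else 0) +
        (if J (τ (colJN hk c1)) = v then c1+1 else 0)) ≤ dd I J hk τ v := by
    intro v c0 c1 hc0 hc1 hne
    rw [dd_apply]
    rw [← Finset.sum_pair (f := fun c => ((if I (τ (colIN hk c)) = v then c+1 else 0) +
      (if J (τ (colJN hk c)) = v then c+1 else 0))) hne]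
    apply Finset.sum_le_sum_of_subset
    intro x hx
    rw [Finset.mem_insert, Finset.mem_singleton] at hx
    rcases hx with rfl | rfl <;> rw [Finset.mem_range] <;> omega
  -- the downward-forcing step
  have step : ∀ c, c < k-1 →
      (∀ c', c < c' → c' < k-1 →
        τ (colIN hk c') = arowC I J hk c' ∧ τ (colJN hk c') = browN I J hk c') →
      τ (colIN hk c) = arowC I J hk c ∧ τ (colJN hk c) = browN I J hk c := by
    intro c hc IH
    set vI := I (τ (colIN hk c)) with hvI
    set vJ := J (τ (colJN hk c)) with hvJ
    -- classify vI
    have hvIge : c+1 ≤ dd I J hk τ vI := by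
      have := hterm vI c hc
      rw [if_pos rfl] at this
      omega
    have hvIne : dd I J hk σ₀ vI ≠ 0 := by rw [← hττ]; omega
    obtain ⟨cI, hcIlt, hcIcase⟩ := E_classify I J hk hI hJ hD hvIne
    have hEvI : dd I J hk σ₀ vI = cI+1 := by
      rcases hcIcase with h | h
      · rw [h]; exact E_eq_I I J hk hI hJ hD hcIlt
      · rw [h]; exact E_eq_J I J hk hI hJ hD hcIlt
    have hcle : c ≤ cI := by
      have := hττ ▸ hvIge
      omega
    have hcI : cI = c := by
      by_contra hne
      have hlt : c < cI := by omega
      rcases hcIcase with h | h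
      · -- vI = I (arowC cI) with cI > c : row collision
        have h1 : τ (colIN hk c) = arowC I J hk cI := hI.injective h
        have h2 := (IH cI hlt hcIlt).1
        have h3 := τ.injective (h1.trans h2.symm)
        have h4 := congrArg Fin.val h3
        rw [colIN_val hk hc, colIN_val hk hcIlt] at h4
        omega
      · -- vI = J (browN cI) with cI > c : double budget
        have h2 := (IH cI hlt hcIlt).2
        have hb := hpair vI c cI hc hcIlt (by omega)
        rw [if_pos rfl] at hb
        rw [h2, if_pos h.symm] at hb
        have := hττ ▸ hb
        omega
    -- classify vJ
    have hvJge : c+1 ≤ dd I J hk τ vJ := by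
      have := hterm vJ c hc
      rw [if_pos rfl] at this
      omega
    have hvJne : dd I J hk σ₀ vJ ≠ 0 := by rw [← hττ]; omega
    obtain ⟨cJ, hcJlt, hcJcase⟩ := E_classify I J hk hI hJ hD hvJne
    have hEvJ : dd I J hk σ₀ vJ = cJ+1 := by
      rcases hcJcase with h | h
      · rw [h]; exact E_eq_I I J hk hI hJ hD hcJlt
      · rw [h]; exact E_eq_J I J hk hI hJ hD hcJlt
    have hcleJ : c ≤ cJ := by
      have := hττ ▸ hvJge
      omega
    have hcJ : cJ = c := by
      by_contra hne
      have hlt : c < cJ := by omega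
      rcases hcJcase with h | h
      · -- vJ = I (arowC cJ) with cJ > c : double budget
        have h2 := (IH cJ hlt hcJlt).1
        have hb := hpair vJ c cJ hc hcJlt (by omega)
        rw [if_pos rfl] at hb
        rw [h2, if_pos h.symm] at hb
        have := hττ ▸ hb
        omega
      · -- vJ = J (browN cJ) with cJ > c : row collision
        have h1 : τ (colJN hk c) = browN I J hk cJ := hJ.injective h
        have h2 := (IH cJ hlt hcJlt).2
        have h3 := τ.injective (h1.trans h2.symm)
        have h4 := congrArg Fin.val h3
        rw [colJN_val hk hc, colJN_val hk hcJlt] at h4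
        omega
    rw [hcI] at hcIcase hEvI
    rw [hcJ] at hcJcase hEvJ
    -- vI ≠ vJ
    have hvIvJ : vI ≠ vJ := by
      intro h
      have hb := hterm vI c hc
      rw [if_pos rfl, if_pos (hvJ.symm.trans h.symm)] at hb
      have := hττ ▸ hb
      omega
    rcases hcIcase with hA | hB
    · -- vI = I (arowC c) : the good case
      have h1 : τ (colIN hk c) = arowC I J hk c := hI.injective hA
      refine ⟨h1, ?_⟩
      rcases hcJcase with hA' | hB'
      · exact absurd (hA.trans hA'.symm) hvIvJ
      · exact hJ.injective hB'
    · -- vI = J (browN c) : impossible by the anchor property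
      exfalso
      have hvJA : vJ = I (arowC I J hk c) := by
        rcases hcJcase with hA' | hB'
        · exact hA'
        · exact absurd (hB.trans hB'.symm) hvIvJ
      -- the row τ (colJN c) has J-value I (arowN (k-2-c))
      have hanch := arow_anchor I J hk hI hJ hD (show k-2-c < k by omega)
        (τ (colJN hk c)) hvJA
      obtain ⟨i, hi, hrow⟩ := (mem_gset I J hk).mp hanch
      -- k-2-c ≥ 1 since i < k-2-c
      have hcc : c < k-2-i ∧ k-2-i < k-1 ∧ i = k-2-(k-2-i) := by omega
      have h2 := (IH (k-2-i) hcc.1 hcc.2.1).1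
      have h3 : τ (colJN hk c) = τ (colIN hk (k-2-i)) := by
        rw [h2, hrow, arowC]
        congr 1
        omega
      have h4 := congrArg Fin.val (τ.injective h3)
      rw [colJN_val hk hc, colIN_val hk hcc.2.1] at h4
      omega
  -- downward induction to get all stages
  have hall : ∀ c, c < k-1 →
      τ (colIN hk c) = arowC I J hk c ∧ τ (colJN hk c) = browN I J hk c := by
    have main : ∀ d c, c < k-1 → k-1-c ≤ d →
        τ (colIN hk c) = arowC I J hk c ∧ τ (colJN hk c) = browN I J hk c := by
      intro d
      induction d with
      | zero => intro c hc hd; omega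
      | succ d ih =>
          intro c hc hd
          exact step c hc (fun c' hcc' hc' => ih c' hc' (by omega))
    exact fun c hc => main (k-1) c hc (by omega)
  -- conclude τ = σ₀
  have hne0 : ∀ col : Fin (2*k-1), (col : ℕ) ≠ 0 → τ col = σ₀ col := by
    intro col h0
    by_cases h1 : (col : ℕ) ≤ k-1
    · have hc : (col : ℕ) - 1 < k-1 := by omega
      have hcol : col = colIN hk ((col : ℕ) - 1) := by
        apply Fin.ext
        rw [colIN_val hk hc]
        omega
      rw [hcol, (hall _ hc).1, hσ₀, sigmaPerm_apply, sigmaFun_colI I J hk hc]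
    · have hc : (col : ℕ) - k < k-1 := by
        have := col.isLt
        omega
      have hcol : col = colJN hk ((col : ℕ) - k) := by
        apply Fin.ext
        rw [colJN_val hk hc]
        omega
      rw [hcol, (hall _ hc).2, hσ₀, sigmaPerm_apply, sigmaFun_colJ I J hk hc]
  apply Equiv.ext
  intro col
  by_cases h0 : (col : ℕ) = 0
  · set c₀ := σ₀.symm (τ col) with hc₀
    have hs : σ₀ c₀ = τ col := σ₀.apply_symm_apply _
    by_cases h0' : (c₀ : ℕ) = 0
    · have heq : c₀ = col := Fin.ext (by omega)
      rw [← heq, hs, heq]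
    · have h5 := hne0 c₀ h0'
      rw [← h5] at hs
      have h6 := congrArg Fin.val (τ.injective hs)
      omega
  · exact hne0 col h0

end Budget

end VIJaux

open VIJaux in
/-- In the Leibniz expansion of `det V_{I,J}(X)` there is a monomial obtained from
exactly one permutation; that monomial appears with coefficient `±1` in the
determinant. -/
theorem exists_unique_monomial_in_det (n k : ℕ) (hk : 1 ≤ k)
    (I J : Fin (2 * k - 1) → Fin n) (hI : StrictMono I) (hJ : StrictMono J)
    (hagree : (Finset.univ.filter fun ℓ => I ℓ = J ℓ).card ≤ k - 1) :
    ∃ σ₀ : Equiv.Perm (Fin (2 * k - 1)),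
      (∀ σ : Equiv.Perm (Fin (2 * k - 1)),
        (∏ ℓ, VIJ n k I J (σ ℓ) ℓ) = (∏ ℓ, VIJ n k I J (σ₀ ℓ) ℓ) → σ = σ₀) ∧
      ∃ d : Fin n →₀ ℕ,
        (∏ ℓ, VIJ n k I J (σ₀ ℓ) ℓ) = MvPolynomial.monomial d 1 ∧
        ((VIJ n k I J).det.coeff d = 1 ∨ (VIJ n k I J).det.coeff d = -1) := by
  classical
  have hD : k ≤ (Dset I J).card := by
    have h1 := Finset.card_filter_add_card_filter_not
      (s := (Finset.univ : Finset (Fin (2*k-1)))) (p := fun ℓ => I ℓ = J ℓ)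
    rw [Finset.card_univ, Fintype.card_fin] at h1
    have h2 : (Finset.univ.filter (fun ℓ => ¬ I ℓ = J ℓ)).card = (Dset I J).card := by
      rw [Dset]
    omega
  have huniq : ∀ σ : Equiv.Perm (Fin (2*k-1)),
      (∏ ℓ, VIJ n k I J (σ ℓ) ℓ) = (∏ ℓ, VIJ n k I J (sigmaPerm I J hk hI hJ hD ℓ) ℓ) →
      σ = sigmaPerm I J hk hI hJ hD := by
    intro σ hprod
    rw [prod_eq_monomial I J hk σ, prod_eq_monomial I J hk _] at hprod
    have hdd : dd I J hk σ = dd I J hk (sigmaPerm I J hk hI hJ hD) :=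
      MvPolynomial.monomial_left_injective one_ne_zero hprod
    exact tau_eq_sigma I J hk hI hJ hD σ hdd
  refine ⟨sigmaPerm I J hk hI hJ hD, huniq, dd I J hk (sigmaPerm I J hk hI hJ hD),
    prod_eq_monomial I J hk _, ?_⟩
  set σ₀ := sigmaPerm I J hk hI hJ hD with hσ₀
  set d := dd I J hk σ₀ with hd
  have hcoeff : (VIJ n k I J).det.coeff d = ((Equiv.Perm.sign σ₀ : ℤ)) := by
    rw [Matrix.det_apply', MvPolynomial.coeff_sum]
    rw [Finset.sum_eq_single_of_mem σ₀ (Finset.mem_univ _) (fun σ _ hσne => by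
      rw [prod_eq_monomial I J hk σ,
        show ((Equiv.Perm.sign σ : ℤ) : MvPolynomial (Fin n) ℤ) =
          MvPolynomial.C ((Equiv.Perm.sign σ : ℤ)) from (eq_intCast MvPolynomial.C _).symm,
        MvPolynomial.C_mul_monomial, mul_one, MvPolynomial.coeff_monomial]
      rw [if_neg]
      intro hddeq
      apply hσne
      apply huniq
      rw [prod_eq_monomial I J hk σ, prod_eq_monomial I J hk _, hddeq])]
    rw [prod_eq_monomial I J hk σ₀,
      show ((Equiv.Perm.sign σ₀ : ℤ) : MvPolynomial (Fin n) ℤ) =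
        MvPolynomial.C ((Equiv.Perm.sign σ₀ : ℤ)) from (eq_intCast MvPolynomial.C _).symm,
      MvPolynomial.C_mul_monomial, mul_one, MvPolynomial.coeff_monomial, if_pos rfl]
  rcases Int.units_eq_one_or (Equiv.Perm.sign σ₀) with hs | hs <;>
    rw [hcoeff, hs] <;> simp
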